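/- arXiv:2008.02838 — 7 statements merged into one kernel-verified Lean document; each statement's English description precedes it below -/
import Mathlib

section
/- Let H be a real Hilbert space, a, b > 0, μ > 0, and φ : H → ℝ a nonzero continuous linear functional. Define I(u) = (a/2)‖u‖² − (b/4)‖u‖⁴ − μ·φ(u), and for u ∈ H let I′(u) be the continuous linear functional v ↦ (a − b‖u‖²)·⟨u, v⟩ − μ·φ(v). If c is a real number with c ≥ −a²/(12b) and c ≠ a²/(4b), then every sequence (u_n) in H with I(u_n) → c and ‖I′(u_n)‖ → 0 (in the dual norm) has a subsequence converging strongly in H. -/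
open Filter Topology

lemma norm_smul_clm' {H : Type*} [NormedAddCommGroup H] [NormedSpace ℝ H]
    (r : ℝ) (f : H →L[ℝ] ℝ) : ‖r • f‖ = |r| * ‖f‖ := by
  rw [norm_smul r f,
    Real.norm_eq_abs]

set_option maxHeartbeats 1000000 in
set_option synthInstance.maxHeartbeats 400000 in
theorem stmt_2 {H : Type*} [NormedAddCommGroup H] [InnerProductSpace ℝ H] [CompleteSpace H]
    (a b μ : ℝ) (ha : 0 < a) (hb : 0 < b) (hμ : 0 < μ)
    (φ : H →L[ℝ] ℝ) (hφ : φ ≠ 0)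
    (c : ℝ) (hc₁ : -a ^ 2 / (12 * b) ≤ c) (hc₂ : c ≠ a ^ 2 / (4 * b))
    (u : ℕ → H)
    (hI : Tendsto (fun n => a / 2 * ‖u n‖ ^ 2 - b / 4 * ‖u n‖ ^ 4 - μ * φ (u n)) atTop (𝓝 c))
    (hI' : Tendsto (fun n => ‖(a - b * ‖u n‖ ^ 2) • innerSL ℝ (u n) - μ • φ‖) atTop (𝓝 0)) :
    ∃ (σ : ℕ → ℕ) (u₀ : H), StrictMono σ ∧ Tendsto (fun n => u (σ n)) atTop (𝓝 u₀) := by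
  -- bound on the energy values
  obtain ⟨M, hM⟩ : ∃ M, ∀ n,
      |a / 2 * ‖u n‖ ^ 2 - b / 4 * ‖u n‖ ^ 4 - μ * φ (u n)| ≤ M := by
    obtain ⟨M, hM⟩ := (hI.abs).bddAbove_range
    exact ⟨M, fun n => hM ⟨n, rfl⟩⟩
  have hM0 : 0 ≤ M := le_trans (abs_nonneg _) (hM 0)
  -- bound on the derivative norms
  obtain ⟨E, hE⟩ : ∃ E, ∀ n,
      ‖(a - b * ‖u n‖ ^ 2) • innerSL ℝ (u n) - μ • φ‖ ≤ E := by
    obtain ⟨E, hE⟩ := hI'.bddAbove_range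
    exact ⟨E, fun n => hE ⟨n, rfl⟩⟩
  have hE0 : 0 ≤ E := le_trans (norm_nonneg _) (hE 0)
  -- key inequality
  have key : ∀ n, 3 * b / 4 * ‖u n‖ ^ 4 - a / 2 * ‖u n‖ ^ 2 ≤ M + E * ‖u n‖ := by
    intro n
    have h1 := ((a - b * ‖u n‖ ^ 2) • innerSL ℝ (u n) - μ • φ).le_opNorm (u n)
    have h2 : ((a - b * ‖u n‖ ^ 2) • innerSL ℝ (u n) - μ • φ) (u n)
        = (a - b * ‖u n‖ ^ 2) * ‖u n‖ ^ 2 - μ * φ (u n) := by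
      simp [real_inner_self_eq_norm_sq]
    rw [h2] at h1
    have h3 : |(a - b * ‖u n‖ ^ 2) * ‖u n‖ ^ 2 - μ * φ (u n)| ≤ E * ‖u n‖ := by
      rw [Real.norm_eq_abs] at h1
      exact h1.trans (mul_le_mul_of_nonneg_right (hE n) (norm_nonneg _))
    have h4 := (abs_le.mp (hM n)).2
    have h6 := (abs_le.mp h3).1
    nlinarith [h4, h6]
  -- global bound on ‖u n‖
  set R : ℝ := max 1 (4 * (M + a / 2 + E) / (3 * b)) with hR
  have hbound : ∀ n, ‖u n‖ ≤ R := by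
    intro n
    by_contra h
    push_neg at h
    set s := ‖u n‖ with hs
    have hs1 : (1 : ℝ) < s := lt_of_le_of_lt (le_max_left _ _) h
    have hs2 : 4 * (M + a / 2 + E) / (3 * b) < s := lt_of_le_of_lt (le_max_right _ _) h
    have h3b : (0 : ℝ) < 3 * b := by linarith
    have h7 : 4 * (M + a / 2 + E) < 3 * b * s := by
      rw [div_lt_iff₀ h3b] at hs2; linarith
    have hk := key n
    have hs0 : (0:ℝ) < s := lt_trans one_pos hs1
    have e3 : (1:ℝ) ≤ s ^ 3 := by nlinarith
    have e6 : 0 ≤ M * (s ^ 3 - 1) := mul_nonneg hM0 (by linarith)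
    have e7 : 0 ≤ E * (s ^ 3 - s) := mul_nonneg hE0 (by nlinarith)
    have e8 : a / 2 * s ^ 2 ≤ a / 2 * s ^ 3 := by
      nlinarith [mul_nonneg (sq_nonneg s) (by linarith : (0:ℝ) ≤ s - 1), ha.le]
    have e4 : 4 * (M + a / 2 + E) * s ^ 3 < 3 * b * s * s ^ 3 :=
      mul_lt_mul_of_pos_right h7 (pow_pos hs0 3)
    nlinarith [hk, e6, e7, e8, e4]
  -- extract subsequence with convergent ‖u n‖²
  have htmem : ∀ n, ‖u n‖ ^ 2 ∈ Set.Icc (0 : ℝ) (R ^ 2) := by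
    intro n
    exact ⟨sq_nonneg _, by nlinarith [hbound n, norm_nonneg (u n)]⟩
  obtain ⟨t₀, ht₀, σ, hσ, hσt⟩ := (isCompact_Icc (a := (0:ℝ)) (b := R ^ 2)).tendsto_subseq htmem
  have hσtend : Tendsto (fun n => ‖u (σ n)‖ ^ 2) atTop (𝓝 t₀) := hσt
  have hI'σ : Tendsto (fun n =>
      ‖(a - b * ‖u (σ n)‖ ^ 2) • innerSL ℝ (u (σ n)) - μ • φ‖) atTop (𝓝 0) :=
    hI'.comp hσ.tendsto_atTop
  have hdtend : Tendsto (fun n => a - b * ‖u (σ n)‖ ^ 2) atTop (𝓝 (a - b * t₀)) :=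
    tendsto_const_nhds.sub (hσtend.const_mul b)
  -- the limit a - b t₀ cannot be zero
  have hd : a - b * t₀ ≠ 0 := by
    intro h0
    have hA : Tendsto (fun n => ‖(a - b * ‖u (σ n)‖ ^ 2) • innerSL ℝ (u (σ n))‖)
        atTop (𝓝 0) := by
      have habs : Tendsto (fun n => |a - b * ‖u (σ n)‖ ^ 2| * R) atTop (𝓝 0) := by
        have : Tendsto (fun n => |a - b * ‖u (σ n)‖ ^ 2|) atTop (𝓝 0) := by
          have := hdtend.abs
          rwa [h0, abs_zero] at this
        simpa using this.mul_const R
      refine squeeze_zero (fun n => norm_nonneg _) (fun n => ?_) habs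
      rw [norm_smul_clm', innerSL_apply_norm]
      exact mul_le_mul_of_nonneg_left (hbound _) (abs_nonneg _)
    have htri : ∀ n, ‖μ • φ‖ ≤
        ‖(a - b * ‖u (σ n)‖ ^ 2) • innerSL ℝ (u (σ n)) - μ • φ‖ +
        ‖(a - b * ‖u (σ n)‖ ^ 2) • innerSL ℝ (u (σ n))‖ := by
      intro n
      calc ‖μ • φ‖ = ‖(a - b * ‖u (σ n)‖ ^ 2) • innerSL ℝ (u (σ n)) -
          ((a - b * ‖u (σ n)‖ ^ 2) • innerSL ℝ (u (σ n)) - μ • φ)‖ := by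
            rw [sub_sub_cancel]
        _ ≤ _ := by
            refine (norm_sub_le _ _).trans ?_
            rw [add_comm]
    have hsum : Tendsto (fun n =>
        ‖(a - b * ‖u (σ n)‖ ^ 2) • innerSL ℝ (u (σ n)) - μ • φ‖ +
        ‖(a - b * ‖u (σ n)‖ ^ 2) • innerSL ℝ (u (σ n))‖) atTop (𝓝 0) := by
      simpa using hI'σ.add hA
    have hle : ‖μ • φ‖ ≤ 0 := ge_of_tendsto hsum (Eventually.of_forall htri)
    rw [norm_smul_clm', abs_of_pos hμ] at hle
    have hφpos : 0 < ‖φ‖ := norm_pos_iff.mpr hφ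
    nlinarith
  -- strong convergence of innerSL (u (σ n))
  have hAlim : Tendsto (fun n => (a - b * ‖u (σ n)‖ ^ 2) • innerSL ℝ (u (σ n)))
      atTop (𝓝 (μ • φ)) := tendsto_iff_norm_sub_tendsto_zero.mpr hI'σ
  have hinv : Tendsto (fun n => (a - b * ‖u (σ n)‖ ^ 2)⁻¹) atTop (𝓝 (a - b * t₀)⁻¹) :=
    hdtend.inv₀ hd
  have hsmul : Tendsto (fun n => (a - b * ‖u (σ n)‖ ^ 2)⁻¹ •
      ((a - b * ‖u (σ n)‖ ^ 2) • innerSL ℝ (u (σ n)))) atTop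
      (𝓝 ((a - b * t₀)⁻¹ • (μ • φ))) := hinv.smul hAlim
  have hne : ∀ᶠ n in atTop, a - b * ‖u (σ n)‖ ^ 2 ≠ 0 := hdtend.eventually_ne hd
  have hinnerlim : Tendsto (fun n => innerSL ℝ (u (σ n))) atTop
      (𝓝 ((a - b * t₀)⁻¹ • (μ • φ))) := by
    refine hsmul.congr' ?_
    filter_upwards [hne] with n hn
    rw [inv_smul_smul₀ hn]
  -- pull back through the Riesz isometry
  have htd : ∀ x : H, (InnerProductSpace.toDual ℝ H x : H →L[ℝ] ℝ) = innerSL ℝ x := by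
    intro x
    ext y
    simp [InnerProductSpace.toDual_apply_apply]
  refine ⟨σ, (InnerProductSpace.toDual ℝ H).symm ((a - b * t₀)⁻¹ • (μ • φ)), hσ, ?_⟩
  have hcont := ((InnerProductSpace.toDual ℝ H).symm.continuous.tendsto _).comp hinnerlim
  refine hcont.congr fun n => ?_
  simp only [Function.comp]
  rw [← htd, LinearIsometryEquiv.symm_apply_apply]
end

section
/- Let H be a real Hilbert space, a, b > 0, μ > 0, and φ : H → ℝ a nonzero continuous linear functional. Define I(u) = (a/2)‖u‖² − (b/4)‖u‖⁴ − μ·φ(u) and I′(u) : v ↦ (a − b‖u‖²)·⟨u, v⟩ − μ·φ(v). Then there is no sequence (u_n) in H with I(u_n) → a²/(4b) and ‖I′(u_n)‖ → 0 in the dual norm; that is, I has no Palais–Smale sequence at the level c = a²/(4b). -/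
open Filter Topology

set_option maxHeartbeats 1000000
set_option synthInstance.maxHeartbeats 1000000

theorem stmt_3 {H : Type*} [NormedAddCommGroup H] [InnerProductSpace ℝ H] [CompleteSpace H]
    (a b μ : ℝ) (ha : 0 < a) (hb : 0 < b) (hμ : 0 < μ)
    (φ : H →L[ℝ] ℝ) (hφ : φ ≠ 0) :
    ¬ ∃ u : ℕ → H,
        Tendsto (fun n => a / 2 * ‖u n‖ ^ 2 - b / 4 * ‖u n‖ ^ 4 - μ * φ (u n)) atTop
          (𝓝 (a ^ 2 / (4 * b))) ∧
        Tendsto (fun n => ‖(a - b * ‖u n‖ ^ 2) • innerSL ℝ (u n) - μ • φ‖) atTop (𝓝 0) := by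
  rintro ⟨u, h1, h2⟩
  set T : ℕ → (H →L[ℝ] ℝ) := fun n => (a - b * ‖u n‖ ^ 2) • innerSL ℝ (u n) - μ • φ with hT
  have hm : 0 < μ * ‖φ‖ := mul_pos hμ (norm_pos_iff.mpr hφ)
  -- s n := |a - b ‖u n‖²| * ‖u n‖ tends to μ‖φ‖
  have hseq : ∀ n, |a - b * ‖u n‖ ^ 2| * ‖u n‖ = ‖(a - b * ‖u n‖ ^ 2) • innerSL ℝ (u n)‖ := by
    intro n
    rw [norm_smul (β := H →L[ℝ] ℝ), Real.norm_eq_abs, innerSL_apply_norm]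
  have hs : Tendsto (fun n => |a - b * ‖u n‖ ^ 2| * ‖u n‖) atTop (𝓝 (μ * ‖φ‖)) := by
    have hconv : Tendsto (fun n => (a - b * ‖u n‖ ^ 2) • innerSL ℝ (u n)) atTop (𝓝 (μ • φ)) := by
      rw [tendsto_iff_norm_sub_tendsto_zero]
      exact h2
    have := (continuous_norm.tendsto (μ • φ)).comp hconv
    have hnorm : ‖μ • φ‖ = μ * ‖φ‖ := by
      rw [norm_smul (β := H →L[ℝ] ℝ), Real.norm_eq_abs, abs_of_pos hμ]
    rw [hnorm] at this
    simpa only [Function.comp_def, hseq] using this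
  -- ‖u n‖ is eventually bounded by R
  set M : ℝ := μ * ‖φ‖ + 1 with hM
  set R : ℝ := max 1 (Real.sqrt ((M + a) / b)) with hR
  have hbound : ∀ᶠ n in atTop, ‖u n‖ ≤ R := by
    have hsM : ∀ᶠ n in atTop, |a - b * ‖u n‖ ^ 2| * ‖u n‖ ≤ M := by
      filter_upwards [hs.eventually (eventually_le_nhds (by simp [hM] : μ * ‖φ‖ < M))]
        with n hn using hn
    filter_upwards [hsM] with n hn
    by_contra hcon
    push_neg at hcon
    have hr1 : (1 : ℝ) < ‖u n‖ := lt_of_le_of_lt (le_max_left _ _) hcon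
    have hr0 : 0 ≤ ‖u n‖ := norm_nonneg _
    have hcube : b * ‖u n‖ ^ 3 - a * ‖u n‖ ≤ M := by
      have habs : b * ‖u n‖ ^ 2 - a ≤ |a - b * ‖u n‖ ^ 2| := by
        rw [abs_sub_comm]; exact le_abs_self _
      nlinarith [abs_nonneg (a - b * ‖u n‖ ^ 2)]
    have hsq : ‖u n‖ ^ 2 ≤ (M + a) / b := by
      have : b * ‖u n‖ ^ 2 ≤ M + a := by nlinarith
      rw [le_div_iff₀ hb]; linarith [this]
    have : ‖u n‖ ≤ Real.sqrt ((M + a) / b) := by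
      rw [show ((M + a) / b) = (Real.sqrt ((M + a) / b)) ^ 2 from
        (Real.sq_sqrt (by positivity : (0:ℝ) ≤ (M + a) / b)).symm] at hsq
      nlinarith [Real.sqrt_nonneg ((M + a) / b)]
    exact absurd (lt_of_le_of_lt (le_max_right 1 _) hcon) (not_lt.mpr this)
  -- evaluation at u n : d n := (a - b t) t - μ φ(u n) → 0
  have hd : Tendsto (fun n => (a - b * ‖u n‖ ^ 2) * ‖u n‖ ^ 2 - μ * φ (u n)) atTop (𝓝 0) := by
    apply squeeze_zero_norm' (a := fun n => ‖T n‖ * R)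
    · filter_upwards [hbound] with n hn
      have heval : T n (u n) = (a - b * ‖u n‖ ^ 2) * ‖u n‖ ^ 2 - μ * φ (u n) := by
        simp [hT, real_inner_self_eq_norm_sq]
        try ring
      calc ‖(a - b * ‖u n‖ ^ 2) * ‖u n‖ ^ 2 - μ * φ (u n)‖ = ‖T n (u n)‖ := by rw [heval]
        _ ≤ ‖T n‖ * ‖u n‖ := (T n).le_opNorm _
        _ ≤ ‖T n‖ * R := by
            exact mul_le_mul_of_nonneg_left hn (norm_nonneg _)
    · simpa using h2.mul_const R
  -- g n := (3b/4) t² - (a/2) t → a²/(4b)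
  have hg : Tendsto (fun n => 3 * b / 4 * (‖u n‖ ^ 2) ^ 2 - a / 2 * ‖u n‖ ^ 2) atTop
      (𝓝 (a ^ 2 / (4 * b))) := by
    have := h1.sub hd
    rw [sub_zero] at this
    convert this using 2 with n
    ring
  -- hence t n → a / b
  have htend : Tendsto (fun n => ‖u n‖ ^ 2 - a / b) atTop (𝓝 0) := by
    have hq : Tendsto (fun n => 3 * b / 4 * (‖u n‖ ^ 2) ^ 2 - a / 2 * ‖u n‖ ^ 2 - a ^ 2 / (4 * b))
        atTop (𝓝 0) := by
      have := hg.sub_const (a ^ 2 / (4 * b))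
      rwa [sub_self] at this
    apply squeeze_zero_norm'
      (a := fun n => (4 / a) * ‖3 * b / 4 * (‖u n‖ ^ 2) ^ 2 - a / 2 * ‖u n‖ ^ 2 - a ^ 2 / (4 * b)‖)
    · filter_upwards with n
      have hfac : 3 * b / 4 * (‖u n‖ ^ 2) ^ 2 - a / 2 * ‖u n‖ ^ 2 - a ^ 2 / (4 * b)
          = (3 * b / 4) * (‖u n‖ ^ 2 - a / b) * (‖u n‖ ^ 2 + a / (3 * b)) := by
        field_simp
        ring
      rw [hfac, Real.norm_eq_abs, Real.norm_eq_abs, abs_mul, abs_mul]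
      have h3b : |3 * b / 4| = 3 * b / 4 := abs_of_pos (by positivity)
      have hpos : |‖u n‖ ^ 2 + a / (3 * b)| = ‖u n‖ ^ 2 + a / (3 * b) := by
        apply abs_of_pos; positivity
      rw [h3b, hpos]
      have hge : a / (3 * b) ≤ ‖u n‖ ^ 2 + a / (3 * b) := le_add_of_nonneg_left (sq_nonneg _)
      have h1' : (3 * b / 4) * |‖u n‖ ^ 2 - a / b| * (a / (3 * b)) ≤
          (3 * b / 4) * |‖u n‖ ^ 2 - a / b| * (‖u n‖ ^ 2 + a / (3 * b)) := by
        apply mul_le_mul_of_nonneg_left hge; positivity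
      have heq : (3 * b / 4) * |‖u n‖ ^ 2 - a / b| * (a / (3 * b)) = (a / 4) * |‖u n‖ ^ 2 - a / b| := by
        field_simp
      rw [heq] at h1'
      rw [div_mul_eq_mul_div, le_div_iff₀ ha]
      nlinarith [abs_nonneg (‖u n‖ ^ 2 - a / b)]
    · simpa using (hq.norm.const_mul (4 / a))
  -- so s n → 0
  have hs0 : Tendsto (fun n => |a - b * ‖u n‖ ^ 2| * ‖u n‖) atTop (𝓝 0) := by
    have habst : Tendsto (fun n => |a - b * ‖u n‖ ^ 2|) atTop (𝓝 0) := by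
      have : Tendsto (fun n => a - b * ‖u n‖ ^ 2) atTop (𝓝 0) := by
        have := htend.const_mul (-b)
        rw [mul_zero] at this
        convert this using 2 with n
        field_simp
        ring
      simpa using this.abs
    apply squeeze_zero_norm' (a := fun n => |a - b * ‖u n‖ ^ 2| * R)
    · filter_upwards [hbound] with n hn
      rw [Real.norm_eq_abs, abs_mul, abs_abs, abs_of_nonneg (norm_nonneg _)]
      exact mul_le_mul_of_nonneg_left hn (abs_nonneg _)
    · simpa using habst.mul_const R
  exact absurd (tendsto_nhds_unique hs hs0) (ne_of_gt hm)
end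

section
/- Let H be a real normed space, a, b > 0, K > 0, and φ : H → ℝ a linear functional with |φ(u)| ≤ K·‖u‖ for all u ∈ H. Define I(u) = (a/2)‖u‖² − (b/4)‖u‖⁴ − μ·φ(u). If 0 < μ ≤ (a/(18b))·√(6ab)/K, then for every u ∈ H with ‖u‖ = √(2a/(3b)) one has I(u) ≥ a²/(9b). -/
theorem stmt_4 {H : Type*} [NormedAddCommGroup H] [NormedSpace ℝ H]
    (a b K μ : ℝ) (ha : 0 < a) (hb : 0 < b) (hK : 0 < K)
    (φ : H →ₗ[ℝ] ℝ) (hφ : ∀ u : H, |φ u| ≤ K * ‖u‖)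
    (hμ₀ : 0 < μ) (hμ : μ ≤ (a / (18 * b)) * Real.sqrt (6 * a * b) / K) :
    ∀ u : H, ‖u‖ = Real.sqrt (2 * a / (3 * b)) →
      a ^ 2 / (9 * b) ≤ a / 2 * ‖u‖ ^ 2 - b / 4 * ‖u‖ ^ 4 - μ * φ u := by
  intro u hu
  have hr : (0:ℝ) ≤ 2 * a / (3 * b) := by positivity
  have h2 : ‖u‖ ^ 2 = 2 * a / (3 * b) := by
    rw [hu, Real.sq_sqrt hr]
  have h4 : ‖u‖ ^ 4 = (2 * a / (3 * b)) ^ 2 := by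
    rw [show (4:ℕ) = 2 * 2 from rfl, pow_mul, h2]
  -- bound μ * φ u
  have hprod : Real.sqrt (6 * a * b) * Real.sqrt (2 * a / (3 * b)) = 2 * a := by
    rw [← Real.sqrt_mul (by positivity)]
    have : 6 * a * b * (2 * a / (3 * b)) = (2 * a) ^ 2 := by
      field_simp; ring
    rw [this, Real.sqrt_sq (by positivity)]
  have hbound : μ * φ u ≤ a ^ 2 / (9 * b) := by
    have h1 : μ * φ u ≤ μ * (K * ‖u‖) := by
      have := (abs_le.mp (hφ u)).2
      nlinarith
    have h2' : μ * (K * ‖u‖) ≤ (a / (18 * b)) * Real.sqrt (6 * a * b) / K * (K * ‖u‖) := by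
      have hKn : (0:ℝ) ≤ K * ‖u‖ := by positivity
      exact mul_le_mul_of_nonneg_right hμ hKn
    have h3 : (a / (18 * b)) * Real.sqrt (6 * a * b) / K * (K * ‖u‖) = a ^ 2 / (9 * b) := by
      rw [hu]
      generalize hS : Real.sqrt (6 * a * b) = S at hprod ⊢
      generalize hT : Real.sqrt (2 * a / (3 * b)) = T at hprod ⊢
      have hK' : K ≠ 0 := ne_of_gt hK
      field_simp
      linear_combination 9 * hprod
    linarith
  rw [h2, h4]
  have : a / 2 * (2 * a / (3 * b)) - b / 4 * (2 * a / (3 * b)) ^ 2 = 2 * (a ^ 2 / (9 * b)) := by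
    field_simp; ring
  rw [this]
  linarith
end

section
/- Let H be a real normed space, a, b > 0, μ > 0, and φ : H → ℝ a continuous linear functional. Define I(u) = (a/2)‖u‖² − (b/4)‖u‖⁴ − μ·φ(u). If there exists ũ ∈ H with φ(ũ) > 0, then there exists u ∈ H with ‖u‖ ≤ √(2a/(3b)) and I(u) < 0; in particular the infimum of I over the closed ball {u : ‖u‖ ≤ √(2a/(3b))} is negative. -/
theorem stmt_5 {H : Type*} [NormedAddCommGroup H] [NormedSpace ℝ H]
    (a b μ : ℝ) (ha : 0 < a) (hb : 0 < b) (hμ : 0 < μ)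
    (φ : H →L[ℝ] ℝ) (u₀ : H) (hu₀ : 0 < φ u₀) :
    (∃ u : H, ‖u‖ ≤ Real.sqrt (2 * a / (3 * b)) ∧
      a / 2 * ‖u‖ ^ 2 - b / 4 * ‖u‖ ^ 4 - μ * φ u < 0) ∧
    sInf ((fun u : H => a / 2 * ‖u‖ ^ 2 - b / 4 * ‖u‖ ^ 4 - μ * φ u) ''
      {u : H | ‖u‖ ≤ Real.sqrt (2 * a / (3 * b))}) < 0 := by
  set R := Real.sqrt (2 * a / (3 * b)) with hR
  have hRpos : 0 < R := Real.sqrt_pos.mpr (by positivity)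
  have hN : 0 < ‖u₀‖ := by
    rcases eq_or_lt_of_le (norm_nonneg u₀) with h | h
    · exfalso
      have : u₀ = 0 := norm_eq_zero.mp h.symm
      simp [this] at hu₀
    · exact h
  set N := ‖u₀‖ with hNdef
  set P := φ u₀ with hPdef
  set t := min (R / N) (μ * P / (a * N ^ 2)) with ht
  have htpos : 0 < t := lt_min (by positivity) (by positivity)
  have ht1 : t ≤ R / N := min_le_left _ _
  have ht2 : t ≤ μ * P / (a * N ^ 2) := min_le_right _ _
  have hnorm : ‖t • u₀‖ = t * N := by
    rw [norm_smul, Real.norm_eq_abs, abs_of_pos htpos]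
  have hball : ‖t • u₀‖ ≤ R := by
    rw [hnorm]
    calc t * N ≤ R / N * N := by nlinarith
    _ = R := by field_simp
  have hφt : φ (t • u₀) = t * P := by simp [hPdef, mul_comm]
  have hIneg : a / 2 * ‖t • u₀‖ ^ 2 - b / 4 * ‖t • u₀‖ ^ 4 - μ * φ (t • u₀) < 0 := by
    rw [hnorm, hφt]
    have h1 : a / 2 * (t * N) ^ 2 ≤ t * (μ * P / 2) := by
      have h3 : t * (a * N ^ 2) ≤ μ * P :=
        (le_div_iff₀ (by positivity : (0:ℝ) < a * N ^ 2)).mp ht2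
      nlinarith
    have h2 : 0 ≤ b / 4 * (t * N) ^ 4 := by positivity
    nlinarith [mul_pos htpos (mul_pos hμ hu₀)]
  refine ⟨⟨t • u₀, hball, hIneg⟩, ?_⟩
  have hmem : (a / 2 * ‖t • u₀‖ ^ 2 - b / 4 * ‖t • u₀‖ ^ 4 - μ * φ (t • u₀)) ∈
      ((fun u : H => a / 2 * ‖u‖ ^ 2 - b / 4 * ‖u‖ ^ 4 - μ * φ u) ''
      {u : H | ‖u‖ ≤ R}) := ⟨t • u₀, hball, rfl⟩
  have hbdd : BddBelow ((fun u : H => a / 2 * ‖u‖ ^ 2 - b / 4 * ‖u‖ ^ 4 - μ * φ u) ''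
      {u : H | ‖u‖ ≤ R}) := by
    refine ⟨-(b / 4 * R ^ 4 + μ * ‖φ‖ * R), ?_⟩
    rintro x ⟨u, hu, rfl⟩
    simp only [Set.mem_setOf_eq] at hu
    have h0 : (0:ℝ) ≤ ‖u‖ := norm_nonneg u
    have h4 : ‖u‖ ^ 4 ≤ R ^ 4 := pow_le_pow_left₀ h0 hu 4
    have hφu : φ u ≤ ‖φ‖ * ‖u‖ := le_trans (le_abs_self _) (φ.le_opNorm u)
    have hφn : (0:ℝ) ≤ ‖φ‖ := norm_nonneg _
    have : μ * φ u ≤ μ * ‖φ‖ * R := by nlinarith [mul_le_mul_of_nonneg_left hu hφn]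
    nlinarith
  exact lt_of_le_of_lt (csInf_le hbdd hmem) hIneg
end

section
/- Let H be a real normed space, a, b > 0, K > 0, μ > 0, and φ : H → ℝ a linear functional with |φ(u)| ≤ K·‖u‖ for all u ∈ H. Define I(u) = (a/2)‖u‖² − (b/4)‖u‖⁴ − μ·φ(u). Then for every u ∈ H with ‖u‖² ≥ (2/b)·[a + (a² + b·μ²·K²/(2a))^{1/2}] one has I(u) ≤ 0. -/
theorem stmt_6 {H : Type*} [NormedAddCommGroup H] [NormedSpace ℝ H]
    (a b K μ : ℝ) (ha : 0 < a) (hb : 0 < b) (hK : 0 < K) (hμ : 0 < μ)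
    (φ : H →ₗ[ℝ] ℝ) (hφ : ∀ u : H, |φ u| ≤ K * ‖u‖) :
    ∀ u : H, (2 / b) * (a + Real.sqrt (a ^ 2 + b * μ ^ 2 * K ^ 2 / (2 * a))) ≤ ‖u‖ ^ 2 →
      a / 2 * ‖u‖ ^ 2 - b / 4 * ‖u‖ ^ 4 - μ * φ u ≤ 0 := by
  intro u hu
  set n := ‖u‖ with hn
  have hn0 : 0 ≤ n := norm_nonneg u
  have hφu : -(μ * (K * n)) ≤ μ * φ u := by
    have := (abs_le.mp (hφ u)).1
    nlinarith [this]
  have hc : 0 ≤ a ^ 2 + b * μ ^ 2 * K ^ 2 / (2 * a) := by positivity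
  set s := Real.sqrt (a ^ 2 + b * μ ^ 2 * K ^ 2 / (2 * a)) with hsdef
  have hs2 : s ^ 2 = a ^ 2 + b * μ ^ 2 * K ^ 2 / (2 * a) := Real.sq_sqrt hc
  have hs0 : 0 ≤ s := Real.sqrt_nonneg _
  -- n^2 ≥ (2/b)(a+s) ≥ (2/b)(a-s)
  have h1 : n ^ 2 - (2 / b) * (a + s) ≥ 0 := by linarith
  have h2 : n ^ 2 - (2 / b) * (a - s) ≥ 0 := by
    have : (2 / b) * (a - s) ≤ (2 / b) * (a + s) := by
      apply mul_le_mul_of_nonneg_left (by linarith) (by positivity)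
    linarith
  have hprod : (n ^ 2 - (2 / b) * (a + s)) * (n ^ 2 - (2 / b) * (a - s)) ≥ 0 :=
    mul_nonneg h1 h2
  have hyoung : μ * (K * n) ≤ a / 2 * n ^ 2 + μ ^ 2 * K ^ 2 / (2 * a) := by
    rw [← mul_le_mul_iff_right₀ (show (0:ℝ) < 2 * a by positivity)]
    have h2a : 2 * a * (a / 2 * n ^ 2 + μ ^ 2 * K ^ 2 / (2 * a))
        = a ^ 2 * n ^ 2 + μ ^ 2 * K ^ 2 := by field_simp
    rw [h2a]
    nlinarith [sq_nonneg (a * n - μ * K)]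
  have hb' : b ≠ 0 := ne_of_gt hb
  have key : b / 4 * n ^ 4 - a * n ^ 2 - μ ^ 2 * K ^ 2 / (2 * a) ≥ 0 := by
    have expand : (n ^ 2 - (2 / b) * (a + s)) * (n ^ 2 - (2 / b) * (a - s))
        = n ^ 4 - (4 / b) * a * n ^ 2 + (4 / b ^ 2) * (a ^ 2 - s ^ 2) := by
      field_simp; ring
    rw [expand, hs2] at hprod
    have : n ^ 4 - (4 / b) * a * n ^ 2 - (4 / b ^ 2) * (b * μ ^ 2 * K ^ 2 / (2 * a)) ≥ 0 := by
      linarith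
    have h4 : (4 / b ^ 2) * (b * μ ^ 2 * K ^ 2 / (2 * a)) = (4 / b) * (μ ^ 2 * K ^ 2 / (2 * a)) := by
      field_simp
    rw [h4] at this
    have keyeq : b / 4 * (n ^ 4 - 4 / b * a * n ^ 2 - 4 / b * (μ ^ 2 * K ^ 2 / (2 * a)))
        = b / 4 * n ^ 4 - a * n ^ 2 - μ ^ 2 * K ^ 2 / (2 * a) := by field_simp
    have hm := mul_nonneg (show (0:ℝ) ≤ b / 4 by positivity) this
    rw [keyeq] at hm
    linarith
  linarith [hφu, hyoung, key, mul_nonneg ha.le (sq_nonneg n)]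
end

section
/- Let a, b, β > 0 and define g : ℝ → ℝ by g(t) = (a − b·β·t²)·t − μ, and set μ** = 2a√(3ab)/(9b√β). Then for μ ∈ ℝ: (i) if 0 < |μ| < μ**, the equation g(t) = 0 has exactly three real solutions; (ii) if |μ| = μ**, it has exactly two real solutions; (iii) if |μ| > μ**, it has exactly one real solution. Moreover, in case (i) the three solutions T₁ < T₂ < T₃ satisfy T₁ < −√(a/(3bβ)) < T₂ < √(a/(3bβ)) < T₃. -/
open Set

lemma hderiv (a c x : ℝ) : HasDerivAt (fun t : ℝ => a * t - c * t ^ 3) (a - 3 * c * x ^ 2) x := by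
  have h1 := (hasDerivAt_id x).const_mul a
  have h2 := (hasDerivAt_pow 3 x).const_mul c
  have := h1.sub h2
  refine this.congr_deriv ?_
  simp; ring

lemma fcont (a c : ℝ) : Continuous (fun t : ℝ => a * t - c * t ^ 3) := by continuity

lemma hs2 (a c : ℝ) (ha : 0 < a) (hc : 0 < c) :
    Real.sqrt (a / (3 * c)) ^ 2 = a / (3 * c) := Real.sq_sqrt (by positivity)

lemma monoMid (a c : ℝ) (ha : 0 < a) (hc : 0 < c) :
    StrictMonoOn (fun t : ℝ => a * t - c * t ^ 3)
      (Icc (-Real.sqrt (a / (3 * c))) (Real.sqrt (a / (3 * c)))) := by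
  set s := Real.sqrt (a / (3 * c)) with hs
  have hsq := hs2 a c ha hc
  apply strictMonoOn_of_deriv_pos (convex_Icc _ _) (fcont a c).continuousOn
  intro x hx
  rw [interior_Icc] at hx
  rw [(hderiv a c x).deriv]
  have hx2 : x ^ 2 < s ^ 2 := sq_lt_sq' hx.1 hx.2
  rw [hsq] at hx2
  have : 3 * c * x ^ 2 < a := by
    calc 3 * c * x ^ 2 < 3 * c * (a / (3 * c)) := by
          apply mul_lt_mul_of_pos_left hx2 (by positivity)
      _ = a := by field_simp
  linarith

lemma antiLeft (a c : ℝ) (ha : 0 < a) (hc : 0 < c) :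
    StrictAntiOn (fun t : ℝ => a * t - c * t ^ 3) (Iic (-Real.sqrt (a / (3 * c)))) := by
  set s := Real.sqrt (a / (3 * c)) with hs
  have hsq := hs2 a c ha hc
  have hspos : 0 < s := Real.sqrt_pos.mpr (by positivity)
  apply strictAntiOn_of_deriv_neg (convex_Iic _) (fcont a c).continuousOn
  intro x hx
  rw [interior_Iic] at hx
  rw [(hderiv a c x).deriv]
  have hx2 : s ^ 2 < x ^ 2 := by nlinarith [mem_Iio.mp hx]
  rw [hsq] at hx2
  rw [div_lt_iff₀ (by positivity : (0:ℝ) < 3 * c)] at hx2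
  nlinarith

lemma antiRight (a c : ℝ) (ha : 0 < a) (hc : 0 < c) :
    StrictAntiOn (fun t : ℝ => a * t - c * t ^ 3) (Ici (Real.sqrt (a / (3 * c)))) := by
  set s := Real.sqrt (a / (3 * c)) with hs
  have hsq := hs2 a c ha hc
  have hspos : 0 < s := Real.sqrt_pos.mpr (by positivity)
  apply strictAntiOn_of_deriv_neg (convex_Ici _) (fcont a c).continuousOn
  intro x hx
  rw [interior_Ici] at hx
  rw [(hderiv a c x).deriv]
  have hx2 : s ^ 2 < x ^ 2 := by nlinarith [mem_Ioi.mp hx]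
  rw [hsq] at hx2
  rw [div_lt_iff₀ (by positivity : (0:ℝ) < 3 * c)] at hx2
  nlinarith

lemma fval (a c : ℝ) (ha : 0 < a) (hc : 0 < c) :
    a * Real.sqrt (a / (3 * c)) - c * Real.sqrt (a / (3 * c)) ^ 3
      = (2 * a / 3) * Real.sqrt (a / (3 * c)) := by
  set s := Real.sqrt (a / (3 * c)) with hs
  have hsq := hs2 a c ha hc
  have h : c * s ^ 2 = a / 3 := by rw [hsq]; field_simp
  linear_combination (-s) * h

lemma existsLeft (a c μ : ℝ) (ha : 0 < a) (hc : 0 < c)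
    (hμ : -((2 * a / 3) * Real.sqrt (a / (3 * c))) ≤ μ) :
    ∃ T, T ≤ -Real.sqrt (a / (3 * c)) ∧ a * T - c * T ^ 3 = μ := by
  set s := Real.sqrt (a / (3 * c)) with hs
  set K := max (max 1 s) (Real.sqrt ((a + |μ|) / c)) with hK
  have hK1 : (1:ℝ) ≤ K := le_trans (le_max_left _ _) (le_max_left _ _)
  have hKs : s ≤ K := le_trans (le_max_right _ _) (le_max_left _ _)
  have hKr : Real.sqrt ((a + |μ|) / c) ≤ K := le_max_right _ _
  have hK2 : (a + |μ|) / c ≤ K ^ 2 := by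
    have := Real.sq_sqrt (show (0:ℝ) ≤ (a + |μ|) / c by positivity)
    calc (a + |μ|) / c = Real.sqrt ((a + |μ|) / c) ^ 2 := this.symm
      _ ≤ K ^ 2 := by
          apply pow_le_pow_left₀ (Real.sqrt_nonneg _) hKr
  have hK2' : a + |μ| ≤ c * K ^ 2 := by
    rw [div_le_iff₀ hc] at hK2; linarith
  have hfK : μ ≤ a * (-K) - c * (-K) ^ 3 := by
    have h1 : μ ≤ |μ| := le_abs_self μ
    have h2 : 0 ≤ |μ| := abs_nonneg μ
    nlinarith
  have hfs : a * (-s) - c * (-s) ^ 3 = -((2 * a / 3) * s) := by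
    have h := fval a c ha hc
    linear_combination (-1 : ℝ) * h
  have hsub := intermediate_value_Icc' (show -K ≤ -s by linarith)
    (fcont a c).continuousOn
  have hmem : μ ∈ Icc ((fun t : ℝ => a * t - c * t ^ 3) (-s))
      ((fun t : ℝ => a * t - c * t ^ 3) (-K)) := by
    simp only
    exact ⟨by rw [hfs] at *; exact hμ, hfK⟩
  obtain ⟨T, hT, hfT⟩ := hsub hmem
  exact ⟨T, hT.2, hfT⟩

lemma existsRight (a c μ : ℝ) (ha : 0 < a) (hc : 0 < c)
    (hμ : μ ≤ (2 * a / 3) * Real.sqrt (a / (3 * c))) :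
    ∃ T, Real.sqrt (a / (3 * c)) ≤ T ∧ a * T - c * T ^ 3 = μ := by
  obtain ⟨T, hT, hfT⟩ := existsLeft a c (-μ) ha hc (by linarith)
  exact ⟨-T, by linarith, by linear_combination (-1 : ℝ) * hfT⟩

lemma case1 (a c μ : ℝ) (ha : 0 < a) (hc : 0 < c)
    (h1 : -((2 * a / 3) * Real.sqrt (a / (3 * c))) < μ)
    (h2 : μ < (2 * a / 3) * Real.sqrt (a / (3 * c))) :
    ∃ T₁ T₂ T₃ : ℝ, {t : ℝ | a * t - c * t ^ 3 = μ} = {T₁, T₂, T₃} ∧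
      T₁ < -Real.sqrt (a / (3 * c)) ∧ -Real.sqrt (a / (3 * c)) < T₂ ∧
      T₂ < Real.sqrt (a / (3 * c)) ∧ Real.sqrt (a / (3 * c)) < T₃ := by
  set s := Real.sqrt (a / (3 * c)) with hs
  have hspos : 0 < s := Real.sqrt_pos.mpr (by positivity)
  have hfv : a * s - c * s ^ 3 = (2 * a / 3) * s := fval a c ha hc
  have hfvneg : a * (-s) - c * (-s) ^ 3 = -((2 * a / 3) * s) := by
    linear_combination (-1 : ℝ) * hfv
  -- T₁
  obtain ⟨T₁, hT₁le, hfT₁⟩ := existsLeft a c μ ha hc h1.le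
  have hT₁ : T₁ < -s := by
    rcases lt_or_eq_of_le hT₁le with h | h
    · exact h
    · exfalso; rw [h] at hfT₁; rw [hfvneg] at hfT₁; linarith
  -- T₃
  obtain ⟨T₃, hT₃ge, hfT₃⟩ := existsRight a c μ ha hc h2.le
  have hT₃ : s < T₃ := by
    rcases lt_or_eq_of_le hT₃ge with h | h
    · exact h
    · exfalso; rw [← h, hfv] at hfT₃; linarith
  -- T₂
  have hsub := intermediate_value_Icc (show -s ≤ s by linarith) (fcont a c).continuousOn
  obtain ⟨T₂, hT₂mem, hfT₂0⟩ := hsub (show μ ∈ Icc ((fun t : ℝ => a * t - c * t ^ 3) (-s))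
      ((fun t : ℝ => a * t - c * t ^ 3) s) by
    simp only; rw [hfvneg, hfv]; exact ⟨h1.le, h2.le⟩)
  have hfT₂ : a * T₂ - c * T₂ ^ 3 = μ := hfT₂0
  have hT₂l : -s < T₂ := by
    rcases lt_or_eq_of_le hT₂mem.1 with h | h
    · exact h
    · exfalso; rw [← h, hfvneg] at hfT₂; linarith
  have hT₂r : T₂ < s := by
    rcases lt_or_eq_of_le hT₂mem.2 with h | h
    · exact h
    · exfalso; rw [h, hfv] at hfT₂; linarith
  refine ⟨T₁, T₂, T₃, ?_, hT₁, hT₂l, hT₂r, hT₃⟩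
  ext t
  simp only [mem_setOf_eq, mem_insert_iff, mem_singleton_iff]
  constructor
  · intro ht
    rcases le_or_gt t (-s) with h | h
    · left
      exact (antiLeft a c ha hc).injOn h hT₁le (by rw [ht, hfT₁])
    · rcases le_or_gt t s with h' | h'
      · right; left
        exact (monoMid a c ha hc).injOn ⟨h.le, h'⟩ ⟨hT₂mem.1, hT₂mem.2⟩
          (show a * t - c * t ^ 3 = a * T₂ - c * T₂ ^ 3 by rw [ht, hfT₂])
      · right; right
        exact (antiRight a c ha hc).injOn h'.le hT₃ge (by rw [ht, hfT₃])
  · rintro (rfl | rfl | rfl) <;> assumption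

lemma case2 (a c μ : ℝ) (ha : 0 < a) (hc : 0 < c)
    (h1 : μ = (2 * a / 3) * Real.sqrt (a / (3 * c))) :
    ∃ T₁ : ℝ, T₁ < -Real.sqrt (a / (3 * c)) ∧
      {t : ℝ | a * t - c * t ^ 3 = μ} = {T₁, Real.sqrt (a / (3 * c))} := by
  set s := Real.sqrt (a / (3 * c)) with hs
  have hspos : 0 < s := Real.sqrt_pos.mpr (by positivity)
  have hMpos : 0 < (2 * a / 3) * s := by positivity
  have hfv : a * s - c * s ^ 3 = (2 * a / 3) * s := fval a c ha hc
  have hfvneg : a * (-s) - c * (-s) ^ 3 = -((2 * a / 3) * s) := by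
    linear_combination (-1 : ℝ) * hfv
  obtain ⟨T₁, hT₁le, hfT₁⟩ := existsLeft a c μ ha hc (by linarith)
  have hT₁ : T₁ < -s := by
    rcases lt_or_eq_of_le hT₁le with h | h
    · exact h
    · exfalso; rw [h] at hfT₁; rw [hfvneg] at hfT₁; linarith
  refine ⟨T₁, hT₁, ?_⟩
  ext t
  simp only [mem_setOf_eq, mem_insert_iff, mem_singleton_iff]
  constructor
  · intro ht
    rcases le_or_gt t (-s) with h | h
    · left
      exact (antiLeft a c ha hc).injOn h hT₁le (by rw [ht, hfT₁])
    · rcases le_or_gt t s with h' | h'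
      · right
        exact (monoMid a c ha hc).injOn ⟨h.le, h'⟩ ⟨by linarith, le_refl s⟩
          (show a * t - c * t ^ 3 = a * s - c * s ^ 3 by rw [ht, hfv]; exact h1)
      · right
        exact (antiRight a c ha hc).injOn h'.le (le_refl s)
          (show a * t - c * t ^ 3 = a * s - c * s ^ 3 by rw [ht, hfv]; exact h1)
  · rintro (rfl | rfl)
    · exact hfT₁
    · rw [hfv, h1]

lemma case3 (a c μ : ℝ) (ha : 0 < a) (hc : 0 < c)
    (h1 : (2 * a / 3) * Real.sqrt (a / (3 * c)) < μ) :
    ∃ T₁ : ℝ, {t : ℝ | a * t - c * t ^ 3 = μ} = {T₁} := by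
  set s := Real.sqrt (a / (3 * c)) with hs
  have hspos : 0 < s := Real.sqrt_pos.mpr (by positivity)
  have hMpos : 0 < (2 * a / 3) * s := by positivity
  have hfv : a * s - c * s ^ 3 = (2 * a / 3) * s := fval a c ha hc
  obtain ⟨T₁, hT₁le, hfT₁⟩ := existsLeft a c μ ha hc (by linarith)
  refine ⟨T₁, ?_⟩
  ext t
  simp only [mem_setOf_eq, mem_singleton_iff]
  constructor
  · intro ht
    rcases le_or_gt t (-s) with h | h
    · exact (antiLeft a c ha hc).injOn h hT₁le (by rw [ht, hfT₁])
    · exfalso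
      rcases le_or_gt t s with h' | h'
      · have h2 := (monoMid a c ha hc).monotoneOn ⟨h.le, h'⟩ ⟨by linarith, le_refl s⟩ h'
        have h3 : a * t - c * t ^ 3 ≤ a * s - c * s ^ 3 := h2
        rw [ht, hfv] at h3; linarith
      · have h2 := (antiRight a c ha hc).antitoneOn (le_refl s) h'.le h'.le
        have h3 : a * t - c * t ^ 3 ≤ a * s - c * s ^ 3 := h2
        rw [ht, hfv] at h3; linarith
  · rintro rfl; exact hfT₁

lemma negSet (a c μ : ℝ) :
    {t : ℝ | a * t - c * t ^ 3 = μ} = Neg.neg '' {t : ℝ | a * t - c * t ^ 3 = -μ} := by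
  ext t
  simp only [mem_image, mem_setOf_eq]
  constructor
  · intro h; exact ⟨-t, by linear_combination -h, neg_neg t⟩
  · rintro ⟨u, hu, rfl⟩; linear_combination -hu

theorem stmt_17 (a b β μ : ℝ) (ha : 0 < a) (hb : 0 < b) (hβ : 0 < β) :
    ((0 < |μ| ∧ |μ| < 2 * a * Real.sqrt (3 * a * b) / (9 * b * Real.sqrt β)) →
      ({t : ℝ | (a - b * β * t ^ 2) * t - μ = 0}.encard = 3 ∧
       ∃ T₁ T₂ T₃ : ℝ, {t : ℝ | (a - b * β * t ^ 2) * t - μ = 0} = {T₁, T₂, T₃} ∧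
         T₁ < -Real.sqrt (a / (3 * b * β)) ∧ -Real.sqrt (a / (3 * b * β)) < T₂ ∧
         T₂ < Real.sqrt (a / (3 * b * β)) ∧ Real.sqrt (a / (3 * b * β)) < T₃)) ∧
    (|μ| = 2 * a * Real.sqrt (3 * a * b) / (9 * b * Real.sqrt β) →
      {t : ℝ | (a - b * β * t ^ 2) * t - μ = 0}.encard = 2) ∧
    (2 * a * Real.sqrt (3 * a * b) / (9 * b * Real.sqrt β) < |μ| →
      {t : ℝ | (a - b * β * t ^ 2) * t - μ = 0}.encard = 1) := by
  have hc : 0 < b * β := by positivity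
  set c := b * β with hcdef
  have h3c : (0:ℝ) < 3 * c := by linarith
  have hspos : 0 < Real.sqrt (a / (3 * c)) := Real.sqrt_pos.mpr (div_pos ha h3c)
  set s := Real.sqrt (a / (3 * c)) with hsdef
  have hsqeq : Real.sqrt (a / (3 * b * β)) = s := by
    rw [hsdef, hcdef, mul_assoc]
  have hset : ∀ ν : ℝ, {t : ℝ | (a - b * β * t ^ 2) * t - ν = 0}
      = {t : ℝ | a * t - c * t ^ 3 = ν} := by
    intro ν; ext t; simp only [mem_setOf_eq, hcdef]
    constructor <;> intro h <;> linear_combination h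
  set M := (2 * a / 3) * s with hMdef
  have hMpos : 0 < M := by rw [hMdef]; positivity
  have hM : 2 * a * Real.sqrt (3 * a * b) / (9 * b * Real.sqrt β) = M := by
    have e1 : Real.sqrt (3 * a * b) ^ 2 = 3 * a * b := Real.sq_sqrt (by positivity)
    have e2 : Real.sqrt β ^ 2 = β := Real.sq_sqrt hβ.le
    have e3 : s ^ 2 = a / (3 * c) := Real.sq_sqrt (div_pos ha h3c).le
    have h1 : 0 ≤ 2 * a * Real.sqrt (3 * a * b) / (9 * b * Real.sqrt β) := by positivity
    have key : (2 * a * Real.sqrt (3 * a * b) / (9 * b * Real.sqrt β)) ^ 2 = M ^ 2 := by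
      rw [hMdef]
      simp only [div_pow, mul_pow, e1, e2, e3, hcdef]
      field_simp
      ring
    calc 2 * a * Real.sqrt (3 * a * b) / (9 * b * Real.sqrt β)
        = Real.sqrt ((2 * a * Real.sqrt (3 * a * b) / (9 * b * Real.sqrt β)) ^ 2) :=
          (Real.sqrt_sq h1).symm
      _ = Real.sqrt (M ^ 2) := by rw [key]
      _ = M := Real.sqrt_sq hMpos.le
  rw [hM, hsqeq, hset μ]
  refine ⟨?_, ?_, ?_⟩
  · rintro ⟨h0, hlt⟩
    have habs := abs_lt.mp hlt
    obtain ⟨T₁, T₂, T₃, hSet, o1, o2, o3, o4⟩ := case1 a c μ ha hc habs.1 habs.2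
    refine ⟨?_, T₁, T₂, T₃, hSet, o1, o2, o3, o4⟩
    rw [hSet]
    rw [Set.encard_insert_of_notMem (by
      simp only [mem_insert_iff, mem_singleton_iff]
      push_neg
      constructor <;> [exact ne_of_lt (by linarith); exact ne_of_lt (by linarith)]),
      Set.encard_pair (ne_of_lt (by linarith))]
    rfl
  · intro heq
    rcases (abs_eq hMpos.le).mp heq with h | h
    · obtain ⟨T₁, hT₁, hSet⟩ := case2 a c μ ha hc h
      rw [hSet, Set.encard_pair (ne_of_lt (by linarith))]
    · obtain ⟨T₁, hT₁, hSet⟩ := case2 a c (-μ) ha hc (by linarith)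
      rw [negSet, hSet, neg_injective.encard_image _,
        Set.encard_pair (ne_of_lt (by linarith))]
  · intro hlt
    rcases abs_cases μ with ⟨he, _⟩ | ⟨he, _⟩
    · obtain ⟨T₁, hSet⟩ := case3 a c μ ha hc (by rw [← he]; exact hlt)
      rw [hSet, Set.encard_singleton]
    · obtain ⟨T₁, hSet⟩ := case3 a c (-μ) ha hc (by rw [← he]; exact hlt)
      rw [negSet, hSet, neg_injective.encard_image _,
        Set.encard_singleton]
end

section
/- Let H be a real Hilbert space, a, b > 0, and φ : H → ℝ a nonzero continuous linear functional with Riesz representative U ∈ H (i.e. ⟨U, v⟩ = φ(v) for all v ∈ H, U ≠ 0). Set μ** = 2a√(3ab)/(9b‖U‖). Then the set S_μ = {u ∈ H : (a − b‖u‖²)·⟨u, v⟩ = μ·φ(v) for all v ∈ H} satisfies: S_μ has exactly three elements if 0 < |μ| < μ**, exactly two elements if |μ| = μ**, and exactly one element if |μ| > μ**. Moreover every element of S_μ is a real scalar multiple of U. -/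
open Set

lemma cubic_count (a c : ℝ) (ha : 0 < a) (hc : 0 < c) (μ : ℝ) :
    (|μ| < (2*a/3) * Real.sqrt (a/(3*c)) → {t : ℝ | a*t - c*t^3 = μ}.encard = 3) ∧
    (|μ| = (2*a/3) * Real.sqrt (a/(3*c)) → {t : ℝ | a*t - c*t^3 = μ}.encard = 2) ∧
    ((2*a/3) * Real.sqrt (a/(3*c)) < |μ| → {t : ℝ | a*t - c*t^3 = μ}.encard = 1) := by
  set m := Real.sqrt (a/(3*c)) with hm_def
  have hm2 : m^2 = a/(3*c) := Real.sq_sqrt (by positivity)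
  have hm : 0 < m := Real.sqrt_pos.mpr (by positivity)
  have h3 : 3*c*m^2 = a := by rw [hm2]; field_simp
  set g : ℝ → ℝ := fun t => a*t - c*t^3 with hg_def
  have hgc : Continuous g := by fun_prop
  have hder : ∀ t : ℝ, HasDerivAt g (a - 3*c*t^2) t := by
    intro t
    have h := ((hasDerivAt_id t).const_mul a).sub ((hasDerivAt_pow 3 t).const_mul c)
    have he : a - 3*c*t^2 = a*1 - c*(3*t^(3-1)) := by norm_num; ring
    rw [he]; exact h
  have mono : StrictMonoOn g (Icc (-m) m) := by
    apply strictMonoOn_of_deriv_pos (convex_Icc _ _) hgc.continuousOn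
    intro t ht
    rw [interior_Icc] at ht
    rw [(hder t).deriv]
    nlinarith [h3, mul_pos hc (mul_pos (by linarith [ht.2] : (0:ℝ) < m - t)
      (by linarith [ht.1] : (0:ℝ) < m + t))]
  have anti1 : StrictAntiOn g (Iic (-m)) := by
    apply strictAntiOn_of_deriv_neg (convex_Iic _) hgc.continuousOn
    intro t ht
    rw [interior_Iic] at ht
    rw [(hder t).deriv]
    have ht' : t < -m := ht
    nlinarith [h3, mul_pos hc (mul_pos (by linarith : (0:ℝ) < -m - t)
      (by linarith : (0:ℝ) < m - t))]
  have anti2 : StrictAntiOn g (Ici m) := by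
    apply strictAntiOn_of_deriv_neg (convex_Ici _) hgc.continuousOn
    intro t ht
    rw [interior_Ici] at ht
    have ht' : m < t := ht
    rw [(hder t).deriv]
    nlinarith [h3, mul_pos hc (mul_pos (by linarith : (0:ℝ) < t - m)
      (by linarith : (0:ℝ) < t + m))]
  have hcm : c * m^3 = a*m/3 := by
    have hh : m^3 = (a/(3*c)) * m := by rw [← hm2]; ring
    rw [hh]; field_simp
  have gm : g m = (2*a/3)*m := by
    show a*m - c*m^3 = (2*a/3)*m
    linear_combination -hcm
  have gm' : g (-m) = -((2*a/3)*m) := by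
    show a*(-m) - c*(-m)^3 = -((2*a/3)*m)
    linear_combination hcm
  have hμs : 0 < (2*a/3)*m := by positivity
  have exR : ∀ (ν : ℝ), ν < (2*a/3)*m → ∃ t, m < t ∧ g t = ν := by
    intro ν hν
    obtain ⟨s, hs0, hs2⟩ : ∃ s : ℝ, 0 ≤ s ∧ c*s^2 = a+1 :=
      ⟨Real.sqrt ((a+1)/c), Real.sqrt_nonneg _, by
        rw [Real.sq_sqrt (by positivity)]; field_simp⟩
    set K := m + s + |ν| + 1 with hK_def
    have hν0 : (0:ℝ) ≤ |ν| := abs_nonneg ν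
    have hmK : m ≤ K := by rw [hK_def]; linarith
    have hK0 : 0 < K := by linarith
    have hsK : s ≤ K := by rw [hK_def]; linarith
    have hcK : a + 1 ≤ c*K^2 := by
      have := mul_le_mul_of_nonneg_left (pow_le_pow_left₀ hs0 hsK 2) hc.le
      linarith [hs2]
    have hgK : g K < ν := by
      show a*K - c*K^3 < ν
      have h1 : a*K - c*K^3 = K * (a - c*K^2) := by ring
      rw [h1]
      have h2 : K * (a - c*K^2) ≤ K * (-1) :=
        mul_le_mul_of_nonneg_left (by linarith) hK0.le
      have h3' : -K < ν := by
        have hνK : |ν| < K := by rw [hK_def]; linarith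
        linarith [neg_abs_le ν]
      linarith
    obtain ⟨t, ht, hgt⟩ := intermediate_value_Ioo' hmK hgc.continuousOn
      (show ν ∈ Ioo (g K) (g m) by rw [gm]; exact ⟨hgK, hν⟩)
    exact ⟨t, ht.1, hgt⟩
  have exL : ∀ (ν : ℝ), -((2*a/3)*m) < ν → ∃ t, t < -m ∧ g t = ν := by
    intro ν hν
    obtain ⟨t, ht, hgt⟩ := exR (-ν) (by linarith)
    refine ⟨-t, by linarith, ?_⟩
    show a*(-t) - c*(-t)^3 = ν
    have hgt' : a*t - c*t^3 = -ν := hgt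
    linear_combination -hgt'
  have exM : ∀ (ν : ℝ), -((2*a/3)*m) < ν → ν < (2*a/3)*m → ∃ t, -m < t ∧ t < m ∧ g t = ν := by
    intro ν h1 h2
    obtain ⟨t, ht, hgt⟩ := intermediate_value_Ioo (by linarith : -m ≤ m) hgc.continuousOn
      (show ν ∈ Ioo (g (-m)) (g m) by rw [gm, gm']; exact ⟨h1, h2⟩)
    exact ⟨t, ht.1, ht.2, hgt⟩
  have bndL : ∀ t, t < -m → -((2*a/3)*m) < g t := by
    intro t ht
    have := anti1 ht.le (le_refl (-m)) ht
    rwa [gm'] at this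
  have bndR : ∀ t, m < t → g t < (2*a/3)*m := by
    intro t ht
    have := anti2 (le_refl m) ht.le ht
    rwa [gm] at this
  have bndM : ∀ t, -m ≤ t → t ≤ m → -((2*a/3)*m) ≤ g t ∧ g t ≤ (2*a/3)*m := by
    intro t h1 h2
    constructor
    · have := mono.monotoneOn (left_mem_Icc.mpr (by linarith)) ⟨h1, h2⟩ h1
      rwa [gm'] at this
    · have := mono.monotoneOn ⟨h1, h2⟩ (right_mem_Icc.mpr (by linarith)) h2
      rwa [gm] at this
  refine ⟨?_, ?_, ?_⟩
  · -- three roots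
    intro hlt
    rw [abs_lt] at hlt
    obtain ⟨t₁, ht₁, hg₁⟩ := exL μ (by linarith [hlt.1])
    obtain ⟨t₂, ht₂a, ht₂b, hg₂⟩ := exM μ hlt.1 hlt.2
    obtain ⟨t₃, ht₃, hg₃⟩ := exR μ hlt.2
    have hset : {t : ℝ | a*t - c*t^3 = μ} = {t₁, t₂, t₃} := by
      ext t
      simp only [mem_setOf_eq, mem_insert_iff, mem_singleton_iff]
      constructor
      · intro hgt
        have hgt2 : g t = μ := hgt
        rcases lt_or_ge t (-m) with h | h
        · exact Or.inl (anti1.injOn h.le ht₁.le (hgt2.trans hg₁.symm))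
        rcases le_or_gt t m with h' | h'
        · exact Or.inr (Or.inl (mono.injOn ⟨h, h'⟩ ⟨ht₂a.le, ht₂b.le⟩ (hgt2.trans hg₂.symm)))
        · exact Or.inr (Or.inr (anti2.injOn h'.le ht₃.le (hgt2.trans hg₃.symm)))
      · rintro (rfl | rfl | rfl) <;> assumption
    rw [hset]
    rw [Set.encard_insert_of_notMem (by
      simp only [mem_insert_iff, mem_singleton_iff]
      push_neg
      constructor <;> intro hh <;> [linarith; linarith]),
      Set.encard_pair (by intro hh; rw [hh] at ht₂b; linarith)]
    rfl
  · -- two roots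
    intro heq
    rcases (abs_eq hμs.le).mp heq with h | h
    · obtain ⟨t₁, ht₁, hg₁⟩ := exL μ (by rw [h]; linarith)
      have hset : {t : ℝ | a*t - c*t^3 = μ} = {t₁, m} := by
        ext t
        simp only [mem_setOf_eq, mem_insert_iff, mem_singleton_iff]
        constructor
        · intro hgt
          have hgt2 : g t = μ := hgt
          rcases lt_or_ge t (-m) with hh | hh
          · exact Or.inl (anti1.injOn hh.le ht₁.le (hgt2.trans hg₁.symm))
          rcases le_or_gt t m with hh' | hh'
          · refine Or.inr (mono.injOn ⟨hh, hh'⟩ (right_mem_Icc.mpr (by linarith)) ?_)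
            rw [hgt2, gm, h]
          · exfalso
            have := bndR t hh'
            rw [hgt2] at this; rw [h] at this; linarith
        · rintro (rfl | rfl)
          · exact hg₁
          · show g m = μ; rw [gm, h]
      rw [hset, Set.encard_pair (by intro hh; rw [hh] at ht₁; linarith)]
    · obtain ⟨t₃, ht₃, hg₃⟩ := exR μ (by rw [h]; linarith)
      have hset : {t : ℝ | a*t - c*t^3 = μ} = {-m, t₃} := by
        ext t
        simp only [mem_setOf_eq, mem_insert_iff, mem_singleton_iff]
        constructor
        · intro hgt
          have hgt2 : g t = μ := hgt
          rcases lt_or_ge t (-m) with hh | hh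
          · exfalso
            have := bndL t hh
            rw [hgt2] at this; rw [h] at this; linarith
          rcases le_or_gt t m with hh' | hh'
          · refine Or.inl (mono.injOn ⟨hh, hh'⟩ (left_mem_Icc.mpr (by linarith)) ?_)
            rw [hgt2, gm', h]
          · exact Or.inr (anti2.injOn hh'.le ht₃.le (hgt2.trans hg₃.symm))
        · rintro (rfl | rfl)
          · show g (-m) = μ; rw [gm', h]
          · exact hg₃
      rw [hset, Set.encard_pair (by intro hh; rw [← hh] at ht₃; linarith)]
  · -- one root
    intro hgt'
    rcases lt_abs.mp hgt' with h | h
    · obtain ⟨t₁, ht₁, hg₁⟩ := exL μ (by linarith)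
      have hset : {t : ℝ | a*t - c*t^3 = μ} = {t₁} := by
        ext t
        simp only [mem_setOf_eq, mem_singleton_iff]
        constructor
        · intro hgt
          have hgt2 : g t = μ := hgt
          rcases lt_or_ge t (-m) with hh | hh
          · exact anti1.injOn hh.le ht₁.le (hgt2.trans hg₁.symm)
          rcases le_or_gt t m with hh' | hh'
          · have := (bndM t hh hh').2
            rw [hgt2] at this; linarith
          · have := bndR t hh'
            rw [hgt2] at this; linarith
        · rintro rfl; exact hg₁
      rw [hset, Set.encard_singleton]
    · obtain ⟨t₃, ht₃, hg₃⟩ := exR μ (by linarith)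
      have hset : {t : ℝ | a*t - c*t^3 = μ} = {t₃} := by
        ext t
        simp only [mem_setOf_eq, mem_singleton_iff]
        constructor
        · intro hgt
          have hgt2 : g t = μ := hgt
          rcases lt_or_ge t (-m) with hh | hh
          · have := bndL t hh
            rw [hgt2] at this; linarith
          rcases le_or_gt t m with hh' | hh'
          · have := (bndM t hh hh').1
            rw [hgt2] at this; linarith
          · exact anti2.injOn hh'.le ht₃.le (hgt2.trans hg₃.symm)
        · rintro rfl; exact hg₃
      rw [hset, Set.encard_singleton]

open RealInnerProductSpace

theorem stmt_18 {H : Type*} [NormedAddCommGroup H] [InnerProductSpace ℝ H] [CompleteSpace H]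
    (a b μ : ℝ) (ha : 0 < a) (hb : 0 < b) (hμ : μ ≠ 0)
    (φ : H →L[ℝ] ℝ) (U : H) (hU : ∀ v : H, ⟪U, v⟫ = φ v) (hU0 : U ≠ 0) :
    ((0 < |μ| ∧ |μ| < 2 * a * Real.sqrt (3 * a * b) / (9 * b * ‖U‖)) →
      {u : H | ∀ v : H, (a - b * ‖u‖ ^ 2) * ⟪u, v⟫ = μ * φ v}.encard = 3) ∧
    (|μ| = 2 * a * Real.sqrt (3 * a * b) / (9 * b * ‖U‖) →
      {u : H | ∀ v : H, (a - b * ‖u‖ ^ 2) * ⟪u, v⟫ = μ * φ v}.encard = 2) ∧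
    (2 * a * Real.sqrt (3 * a * b) / (9 * b * ‖U‖) < |μ| →
      {u : H | ∀ v : H, (a - b * ‖u‖ ^ 2) * ⟪u, v⟫ = μ * φ v}.encard = 1) ∧
    (∀ u ∈ {u : H | ∀ v : H, (a - b * ‖u‖ ^ 2) * ⟪u, v⟫ = μ * φ v}, ∃ t : ℝ, u = t • U) := by
  have hUn : 0 < ‖U‖ := norm_pos_iff.mpr hU0
  have hc : 0 < b * ‖U‖^2 := by positivity
  -- threshold identity
  have hthr : (2*a/3) * Real.sqrt (a/(3*(b * ‖U‖^2))) =
      2 * a * Real.sqrt (3 * a * b) / (9 * b * ‖U‖) := by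
    have h1 : a/(3*(b * ‖U‖^2)) = (3*a*b)/(3*b*‖U‖)^2 := by
      field_simp
    rw [h1, Real.sqrt_div (by positivity) _, Real.sqrt_sq (by positivity)]
    field_simp
    ring
  -- characterization of solutions
  have hchar : ∀ u : H, (∀ v : H, (a - b * ‖u‖ ^ 2) * ⟪u, v⟫ = μ * φ v) ↔
      ∃ t : ℝ, a*t - (b * ‖U‖^2)*t^3 = μ ∧ u = t • U := by
    intro u
    constructor
    · intro hu
      have hw : (a - b * ‖u‖^2) • u = μ • U := by
        have h0 : ∀ v : H, ⟪(a - b * ‖u‖^2) • u - μ • U, v⟫ = 0 := by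
          intro v
          rw [inner_sub_left, real_inner_smul_left, real_inner_smul_left, hU v, hu v, sub_self]
        have h1 := h0 ((a - b * ‖u‖^2) • u - μ • U)
        rw [inner_self_eq_zero] at h1
        exact sub_eq_zero.mp h1
      have hk : a - b * ‖u‖^2 ≠ 0 := by
        intro h
        rw [h, zero_smul] at hw
        rcases smul_eq_zero.mp hw.symm with h' | h'
        · exact hμ h'
        · exact hU0 h'
      set t : ℝ := μ / (a - b * ‖u‖^2) with ht_def
      have hu_eq : u = t • U := by
        have h1 : u = (a - b * ‖u‖^2)⁻¹ • ((a - b * ‖u‖^2) • u) := by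
          rw [smul_smul, inv_mul_cancel₀ hk, one_smul]
        rw [h1, hw, smul_smul, ht_def, div_eq_inv_mul]
      refine ⟨t, ?_, hu_eq⟩
      have hnorm : ‖u‖^2 = t^2 * ‖U‖^2 := by
        rw [hu_eq, norm_smul, mul_pow, Real.norm_eq_abs, sq_abs]
      rw [hnorm] at hw
      rw [hu_eq, smul_smul] at hw
      have h2 : ((a - b * (t^2 * ‖U‖^2)) * t) • U = μ • U := hw
      have h3 : (a - b * (t^2 * ‖U‖^2)) * t = μ := by
        have := smul_left_injective ℝ hU0 h2
        exact this
      linear_combination h3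
    · rintro ⟨t, hteq, rfl⟩
      intro v
      have hnorm : ‖t • U‖^2 = t^2 * ‖U‖^2 := by rw [norm_smul, mul_pow, Real.norm_eq_abs, sq_abs]
      rw [hnorm, real_inner_smul_left, ← hU v]
      linear_combination ⟪U, v⟫ * hteq
  have hset : {u : H | ∀ v : H, (a - b * ‖u‖ ^ 2) * ⟪u, v⟫ = μ * φ v} =
      (fun t : ℝ => t • U) '' {t : ℝ | a*t - (b * ‖U‖^2)*t^3 = μ} := by
    ext u
    simp only [Set.mem_setOf_eq, Set.mem_image]
    rw [hchar u]
    exact ⟨fun ⟨t, h1, h2⟩ => ⟨t, h1, h2.symm⟩, fun ⟨t, h1, h2⟩ => ⟨t, h1, h2.symm⟩⟩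
  have hinj : Function.Injective (fun t : ℝ => t • U) := smul_left_injective ℝ hU0
  have key := cubic_count a (b * ‖U‖^2) ha hc μ
  rw [hthr] at key
  refine ⟨fun h => ?_, fun h => ?_, fun h => ?_, ?_⟩
  · rw [hset, hinj.encard_image _]; exact key.1 h.2
  · rw [hset, hinj.encard_image _]; exact key.2.1 h
  · rw [hset, hinj.encard_image _]; exact key.2.2 h
  · intro u hu
    obtain ⟨t, _, rfl⟩ := (hchar u).mp hu
    exact ⟨t, rfl⟩
end
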